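/- arXiv:2601.03841 — 4 statements merged into one kernel-verified Lean document; each statement's English description precedes it below -/
import Mathlib

section
/- Let M be a ground head atom, 𝓘 = (I₁,I₂) a three-valued interpretation, and t ∈ 𝕋. Then ⟦M⟧_𝓘(t) equals the ≤τ-infimum of the set {⟦N⟧_𝓘(t') : (N,t') ∈ F(M,t)}. -/
/- DatalogMTL with negation: common definitions.
   The timeline `T` is an arbitrary linearly ordered additive commutative group
   (covering both ℤ and ℚ); `A` is the type of ground relational atoms. -/

namespace DatalogMTL

/-- An interval on the timeline: a nonempty convex subset whose infimum and
supremum lie in `T ∪ {−∞, +∞}` (i.e. if bounded below/above, a greatest lower /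
least upper bound exists in `T`). -/
structure TInterval (T : Type*) [AddCommGroup T] [LinearOrder T] [IsOrderedAddMonoid T] where
  carrier : Set T
  nonempty : carrier.Nonempty
  convex : ∀ ⦃t₁ t₂ t : T⦄, t₁ ∈ carrier → t₂ ∈ carrier → t₁ < t → t < t₂ → t ∈ carrier
  exists_glb : BddBelow carrier → ∃ a, IsGLB carrier a
  exists_lub : BddAbove carrier → ∃ b, IsLUB carrier b

/-- A non-negative interval. -/
def TInterval.Nonneg {T : Type*} [AddCommGroup T] [LinearOrder T] [IsOrderedAddMonoid T] (δ : TInterval T) : Prop :=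
  ∀ t ∈ δ.carrier, 0 ≤ t

/-- The type of non-negative intervals. -/
abbrev NNInterval (T : Type*) [AddCommGroup T] [LinearOrder T] [IsOrderedAddMonoid T] :=
  {δ : TInterval T // δ.Nonneg}

/-- A (two-valued) interpretation assigns to each timepoint a set of ground
relational atoms; the order is pointwise inclusion. -/
abbrev Interp (T A : Type*) := T → Set A

/-- Ground metric atoms. -/
inductive MetricAtom (T : Type*) [AddCommGroup T] [LinearOrder T] [IsOrderedAddMonoid T] (A : Type*) where
  | top
  | bot
  | rel (a : A)
  | dMinus (δ : NNInterval T) (M : MetricAtom T A)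
  | dPlus (δ : NNInterval T) (M : MetricAtom T A)
  | boxMinus (δ : NNInterval T) (M : MetricAtom T A)
  | boxPlus (δ : NNInterval T) (M : MetricAtom T A)
  | sSince (δ : NNInterval T) (M₁ M₂ : MetricAtom T A)
  | sUntil (δ : NNInterval T) (M₁ M₂ : MetricAtom T A)

/-- Ground head atoms: `⊤ | P(s) | ⊟_δ M | ⊞_δ M`. -/
inductive HeadAtom (T : Type*) [AddCommGroup T] [LinearOrder T] [IsOrderedAddMonoid T] (A : Type*) where
  | top
  | rel (a : A)
  | boxMinus (δ : NNInterval T) (M : HeadAtom T A)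
  | boxPlus (δ : NNInterval T) (M : HeadAtom T A)

variable {T A : Type*} [AddCommGroup T] [LinearOrder T] [IsOrderedAddMonoid T]

/-- Head atoms are metric atoms. -/
def HeadAtom.toMetric : HeadAtom T A → MetricAtom T A
  | .top => .top
  | .rel a => .rel a
  | .boxMinus δ M => .boxMinus δ M.toMetric
  | .boxPlus δ M => .boxPlus δ M.toMetric

/-- Two-valued semantics: `sat I M t` holds iff `⟦M⟧_I(t) = true`
(the truth order `false ≤τ true` is implication). -/
def sat (I : Interp T A) : MetricAtom T A → T → Prop
  | .top, _ => True
  | .bot, _ => False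
  | .rel a, t => a ∈ I t
  | .dMinus δ M, t => ∃ t', t - t' ∈ δ.1.carrier ∧ sat I M t'
  | .dPlus δ M, t => ∃ t', t' - t ∈ δ.1.carrier ∧ sat I M t'
  | .boxMinus δ M, t => ∀ t', t - t' ∈ δ.1.carrier → sat I M t'
  | .boxPlus δ M, t => ∀ t', t' - t ∈ δ.1.carrier → sat I M t'
  | .sSince δ M₁ M₂, t =>
      ∃ t', t - t' ∈ δ.1.carrier ∧ sat I M₂ t' ∧ ∀ t'', t' < t'' → t'' < t → sat I M₁ t''
  | .sUntil δ M₁ M₂, t =>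
      ∃ t', t' - t ∈ δ.1.carrier ∧ sat I M₂ t' ∧ ∀ t'', t < t'' → t'' < t' → sat I M₁ t''

/-- A ground rule body `M₁ ∧ … ∧ M_k ∧ not M_{k+1} ∧ … ∧ not M_m`. -/
structure Body (T : Type*) [AddCommGroup T] [LinearOrder T] [IsOrderedAddMonoid T] (A : Type*) where
  pos : List (MetricAtom T A)
  neg : List (MetricAtom T A)

/-- Two-valued evaluation of a body: the `≤τ`-infimum (conjunction) of its literals. -/
def Body.holds (B : Body T A) (I : Interp T A) (t : T) : Prop :=
  (∀ M ∈ B.pos, sat I M t) ∧ (∀ M ∈ B.neg, ¬ sat I M t)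

/-- A ground rule `M ← B`. -/
structure Rule (T : Type*) [AddCommGroup T] [LinearOrder T] [IsOrderedAddMonoid T] (A : Type*) where
  head : HeadAtom T A
  body : Body T A

/-- A program, represented by its grounding `ground(Π)`: a set of ground rules. -/
abbrev Program (T : Type*) [AddCommGroup T] [LinearOrder T] [IsOrderedAddMonoid T] (A : Type*) := Set (Rule T A)

/-- The function `F` linking a ground head atom to the (atom, timepoint) pairs it refers to. -/
def F : HeadAtom T A → T → Set (HeadAtom T A × T)
  | .boxMinus δ M, t => ⋃ t' ∈ {s : T | t - s ∈ δ.1.carrier}, F M t'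
  | .boxPlus δ M, t => ⋃ t' ∈ {s : T | s - t ∈ δ.1.carrier}, F M t'
  | .top, t => {(.top, t)}
  | .rel a, t => {(.rel a, t)}

/-- A dataset: a finite set of relational facts `P(s)@δ`. -/
structure Dataset (T : Type*) [AddCommGroup T] [LinearOrder T] [IsOrderedAddMonoid T] (A : Type*) where
  facts : Set (A × TInterval T)
  finite : facts.Finite

/-- `I` is a model of the dataset `D`. -/
def Interp.modelOfDataset (I : Interp T A) (D : Dataset T A) : Prop :=
  ∀ a δ, (a, δ) ∈ D.facts → ∀ t ∈ δ.carrier, a ∈ I t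

/-- `I` is a two-valued model of `D` and `Π`. -/
def IsTwoValModel (I : Interp T A) (D : Dataset T A) (P : Program T A) : Prop :=
  I.modelOfDataset D ∧ ∀ r ∈ P, ∀ t : T, r.body.holds I t → sat I r.head.toMetric t

/- Three-valued truth values are identified with consistent pairs of (Prop-valued)
truth values: `true = (True, True)`, `undef = (False, True)`, `false = (False, False)`.
The truth order `false ≤τ undef ≤τ true` is the componentwise order. -/

/-- The three-valued value of a ground metric atom in `𝓘 = (I₁, I₂)`. -/
def tv3 (I₁ I₂ : Interp T A) (M : MetricAtom T A) (t : T) : Prop × Prop :=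
  (sat I₁ M t, sat I₂ M t)

/-- The three-valued value of a negated ground metric atom `not M` in `𝓘 = (I₁, I₂)`:
the inverse `(·)⁻¹` of the value of `M`. -/
def tv3Not (I₁ I₂ : Interp T A) (M : MetricAtom T A) (t : T) : Prop × Prop :=
  (¬ sat I₂ M t, ¬ sat I₁ M t)

/-- Three-valued evaluation of a body: the `≤τ`-infimum of the values of its literals. -/
def Body.holds3 (B : Body T A) (I₁ I₂ : Interp T A) (t : T) : Prop × Prop :=
  ((∀ M ∈ B.pos, sat I₁ M t) ∧ (∀ M ∈ B.neg, ¬ sat I₂ M t),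
   (∀ M ∈ B.pos, sat I₂ M t) ∧ (∀ M ∈ B.neg, ¬ sat I₁ M t))

/-- The truth order `≤τ` on (pair-encoded) truth values. -/
def tauLE (u v : Prop × Prop) : Prop := (u.1 → v.1) ∧ (u.2 → v.2)

/-- The precision order `≤p` on (pair-encoded) truth values: `undef ≤p false`, `undef ≤p true`. -/
def precLE (u v : Prop × Prop) : Prop := (u.1 → v.1) ∧ (v.2 → u.2)

/-- A truth value equals `true = (True, True)`. -/
def tvIsTrue (v : Prop × Prop) : Prop := v.1 ∧ v.2

/-- A truth value differs from `false = (False, False)`. -/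
def tvNotFalse (v : Prop × Prop) : Prop := v.1 ∨ v.2

/-- The `≤τ`-infimum of a set of (pair-encoded) truth values. -/
def tvInf (S : Set (Prop × Prop)) : Prop × Prop := (∀ v ∈ S, v.1, ∀ v ∈ S, v.2)

/-- `(I₁, I₂)` is a three-valued model of the program `Π`. -/
def IsThreeValModelOfProgram (I₁ I₂ : Interp T A) (P : Program T A) : Prop :=
  ∀ r ∈ P, ∀ t : T, tauLE (r.body.holds3 I₁ I₂ t) (tv3 I₁ I₂ r.head.toMetric t)

/-- `(I₁, I₂)` is a three-valued model of `D` and `Π`. -/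
def IsThreeValModel (I₁ I₂ : Interp T A) (D : Dataset T A) (P : Program T A) : Prop :=
  IsThreeValModelOfProgram I₁ I₂ P ∧ I₁.modelOfDataset D

/-- The atoms holding at `t` by virtue of the dataset alone. -/
def dataFacts (D : Dataset T A) (t : T) : Set A :=
  {a | ∃ δ : TInterval T, (a, δ) ∈ D.facts ∧ t ∈ δ.carrier}

/-- The immediate consequence operator `T_{𝒟,Π}`. -/
def Tds (D : Dataset T A) (P : Program T A) (I : Interp T A) : Interp T A := fun t =>
  dataFacts D t ∪
    {a | ∃ r ∈ P, ∃ t' : T, r.body.holds I t' ∧ (HeadAtom.rel a, t) ∈ F r.head t'}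

/-- The first component `A¹_{𝒟,Π}` of the three-valued immediate consequence operator. -/
def A1 (D : Dataset T A) (P : Program T A) (I₁ I₂ : Interp T A) : Interp T A := fun t =>
  dataFacts D t ∪
    {a | ∃ r ∈ P, ∃ t' : T, tvIsTrue (r.body.holds3 I₁ I₂ t') ∧ (HeadAtom.rel a, t) ∈ F r.head t'}

/-- The second component `A²_{𝒟,Π}` of the three-valued immediate consequence operator. -/
def A2 (D : Dataset T A) (P : Program T A) (I₁ I₂ : Interp T A) : Interp T A := fun t =>
  dataFacts D t ∪
    {a | ∃ r ∈ P, ∃ t' : T, tvNotFalse (r.body.holds3 I₁ I₂ t') ∧ (HeadAtom.rel a, t) ∈ F r.head t'}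

/-- `(I₁, I₂)` is an HT-model of `D` and `Π` (Definition of Wałęga et al.). -/
def IsHTModel (D : Dataset T A) (P : Program T A) (I₁ I₂ : Interp T A) : Prop :=
  I₁.modelOfDataset D ∧ ∀ r ∈ P, ∀ t : T,
    (((∀ M ∈ r.body.pos, sat I₁ M t) ∧ (∀ M ∈ r.body.neg, ¬ sat I₂ M t)) →
        sat I₁ r.head.toMetric t) ∧
    (((∀ M ∈ r.body.pos, sat I₂ M t) ∧ (∀ M ∈ r.body.neg, ¬ sat I₂ M t)) →
        sat I₂ r.head.toMetric t)

/-- `I` is a stable HT-model of `D` and `Π`: `(I,I)` is an HT-model and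
`I = ⊓ {J : (J,I) is an HT-model of D and Π}`. -/
def IsStableHTModel (D : Dataset T A) (P : Program T A) (I : Interp T A) : Prop :=
  IsHTModel D P I I ∧ I = sInf {J : Interp T A | IsHTModel D P J I}

theorem DatalogMTL.sat_iff_F {T A : Type*} [AddCommGroup T] [LinearOrder T] [IsOrderedAddMonoid T]
    (I : DatalogMTL.Interp T A) (M : DatalogMTL.HeadAtom T A) (t : T) :
    DatalogMTL.sat I M.toMetric t ↔
      ∀ N t', (N, t') ∈ DatalogMTL.F M t → DatalogMTL.sat I N.toMetric t' := by
  induction M generalizing t with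
  | top =>
    constructor
    · rintro h N t' hm
      simp only [DatalogMTL.F, Set.mem_singleton_iff, Prod.mk.injEq] at hm
      obtain ⟨rfl, rfl⟩ := hm
      exact h
    · intro h
      exact h _ _ (Set.mem_singleton _)
  | rel a =>
    constructor
    · rintro h N t' hm
      simp only [DatalogMTL.F, Set.mem_singleton_iff, Prod.mk.injEq] at hm
      obtain ⟨rfl, rfl⟩ := hm
      exact h
    · intro h
      exact h _ _ (Set.mem_singleton _)
  | boxMinus δ M ih =>
    simp only [DatalogMTL.F, DatalogMTL.HeadAtom.toMetric, DatalogMTL.sat,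
      Set.mem_iUnion, Set.mem_setOf_eq]
    constructor
    · rintro h N t' ⟨s, hs, hmem⟩
      exact (ih s).1 (h s hs) N t' hmem
    · intro h t' ht'
      exact (ih t').2 (fun N s hm => h N s ⟨t', ht', hm⟩)
  | boxPlus δ M ih =>
    simp only [DatalogMTL.F, DatalogMTL.HeadAtom.toMetric, DatalogMTL.sat,
      Set.mem_iUnion, Set.mem_setOf_eq]
    constructor
    · rintro h N t' ⟨s, hs, hmem⟩
      exact (ih s).1 (h s hs) N t' hmem
    · intro h t' ht'
      exact (ih t').2 (fun N s hm => h N s ⟨t', ht', hm⟩)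

end DatalogMTL
/-- For a ground head atom `M`, a three-valued interpretation
`𝓘 = (I₁, I₂)` and `t ∈ 𝕋`: `⟦M⟧_𝓘(t)` equals the `≤τ`-infimum of the set
`{⟦N⟧_𝓘(t') : (N, t') ∈ F(M, t)}`. -/
theorem statement1 {T A : Type*} [AddCommGroup T] [LinearOrder T] [IsOrderedAddMonoid T]
    (I₁ I₂ : DatalogMTL.Interp T A) (hI : I₁ ≤ I₂)
    (M : DatalogMTL.HeadAtom T A) (t : T) :
    DatalogMTL.tv3 I₁ I₂ M.toMetric t =
      DatalogMTL.tvInf {v | ∃ (N : DatalogMTL.HeadAtom T A) (t' : T),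
        (N, t') ∈ DatalogMTL.F M t ∧ v = DatalogMTL.tv3 I₁ I₂ N.toMetric t'} := by
  have key := fun I => DatalogMTL.DatalogMTL.sat_iff_F (A := A) I M t
  unfold DatalogMTL.tv3 DatalogMTL.tvInf
  ext
  · simp only
    rw [key I₁]
    constructor
    · rintro h v ⟨N, t', hm, rfl⟩; exact h N t' hm
    · intro h N t' hm; exact h _ ⟨N, t', hm, rfl⟩
  · simp only
    rw [key I₂]
    constructor
    · rintro h v ⟨N, t', hm, rfl⟩; exact h N t' hm
    · intro h N t' hm; exact h _ ⟨N, t', hm, rfl⟩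
end

section
/- Let Π be a program, 𝒟 a dataset, and 𝓘 = (I₁,I₂) a three-valued interpretation. Then 𝓘 is a three-valued model of 𝒟 and Π if and only if 𝓘 is a pre-fixpoint of the three-valued immediate consequence operator A_{𝒟,Π}, i.e. A¹_{𝒟,Π}(𝓘) ⊆ I₁ and A²_{𝒟,Π}(𝓘) ⊆ I₂. -/
namespace DatalogMTL

variable {T A : Type*} [AddCommGroup T] [LinearOrder T] [IsOrderedAddMonoid T]

lemma sat_mono {I₁ I₂ : Interp T A} (h : I₁ ≤ I₂) :
    ∀ (M : MetricAtom T A) (t : T), sat I₁ M t → sat I₂ M t := by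
  intro M
  induction M with
  | top => intro t _; trivial
  | bot => intro t h; exact h.elim
  | rel a => intro t ha; exact h t ha
  | dMinus δ M ih => rintro t ⟨t', h1, h2⟩; exact ⟨t', h1, ih t' h2⟩
  | dPlus δ M ih => rintro t ⟨t', h1, h2⟩; exact ⟨t', h1, ih t' h2⟩
  | boxMinus δ M ih => intro t hs t' ht'; exact ih t' (hs t' ht')
  | boxPlus δ M ih => intro t hs t' ht'; exact ih t' (hs t' ht')
  | sSince δ M₁ M₂ ih1 ih2 =>
      rintro t ⟨t', h1, h2, h3⟩
      exact ⟨t', h1, ih2 t' h2, fun t'' a b => ih1 t'' (h3 t'' a b)⟩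
  | sUntil δ M₁ M₂ ih1 ih2 =>
      rintro t ⟨t', h1, h2, h3⟩
      exact ⟨t', h1, ih2 t' h2, fun t'' a b => ih1 t'' (h3 t'' a b)⟩

lemma sat_head_iff (I : Interp T A) :
    ∀ (M : HeadAtom T A) (t : T),
      sat I M.toMetric t ↔ ∀ a t', (HeadAtom.rel a, t') ∈ F M t → a ∈ I t' := by
  intro M
  induction M with
  | top =>
      intro t
      simp only [HeadAtom.toMetric, sat, F, Set.mem_singleton_iff, Prod.mk.injEq]
      constructor
      · rintro _ a t' ⟨h, _⟩; cases h
      · intro _; trivial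
  | rel b =>
      intro t
      simp only [HeadAtom.toMetric, sat, F, Set.mem_singleton_iff, Prod.mk.injEq]
      constructor
      · rintro hb a t' ⟨h1, h2⟩; cases h1; cases h2; exact hb
      · intro h; exact h b t ⟨rfl, rfl⟩
  | boxMinus δ M ih =>
      intro t
      simp only [HeadAtom.toMetric, sat, F, Set.mem_iUnion, Set.mem_setOf_eq]
      constructor
      · rintro hs a t' ⟨s, hs1, hmem⟩
        exact (ih s).mp (hs s hs1) a t' hmem
      · intro h t' ht'
        exact (ih t').mpr (fun a s hmem => h a s ⟨t', ht', hmem⟩) 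
  | boxPlus δ M ih =>
      intro t
      simp only [HeadAtom.toMetric, sat, F, Set.mem_iUnion, Set.mem_setOf_eq]
      constructor
      · rintro hs a t' ⟨s, hs1, hmem⟩
        exact (ih s).mp (hs s hs1) a t' hmem
      · intro h t' ht'
        exact (ih t').mpr (fun a s hmem => h a s ⟨t', ht', hmem⟩)

end DatalogMTL

/-- A three-valued interpretation `𝓘 = (I₁, I₂)` is a three-valued
model of `D` and `Π` iff it is a pre-fixpoint of the three-valued immediate
consequence operator, i.e. `A¹_{𝒟,Π}(𝓘) ⊆ I₁` and `A²_{𝒟,Π}(𝓘) ⊆ I₂`. -/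
theorem statement4 {T A : Type*} [AddCommGroup T] [LinearOrder T] [IsOrderedAddMonoid T]
    (D : DatalogMTL.Dataset T A) (P : DatalogMTL.Program T A)
    (I₁ I₂ : DatalogMTL.Interp T A) (hI : I₁ ≤ I₂) :
    DatalogMTL.IsThreeValModel I₁ I₂ D P ↔
      (DatalogMTL.A1 D P I₁ I₂ ≤ I₁ ∧ DatalogMTL.A2 D P I₁ I₂ ≤ I₂) := by
  open DatalogMTL in
  constructor
  · rintro ⟨hprog, hdata⟩
    constructor
    · intro t a ha
      rcases ha with ⟨δ, hfact, ht⟩ | ⟨r, hrP, t', hbody, hF⟩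
      · exact hdata a δ hfact t ht
      · have := (hprog r hrP t').1 hbody.1
        exact (sat_head_iff I₁ r.head t').mp this a t hF
    · intro t a ha
      rcases ha with ⟨δ, hfact, ht⟩ | ⟨r, hrP, t', hbody, hF⟩
      · exact hI t (hdata a δ hfact t ht)
      · have hb2 : (r.body.holds3 I₁ I₂ t').2 := by
          rcases hbody with h1 | h2
          · exact ⟨fun M hM => sat_mono hI M t' (h1.1 M hM),
              fun M hM hs => h1.2 M hM (sat_mono hI M t' hs)⟩
          · exact h2
        have := (hprog r hrP t').2 hb2
        exact (sat_head_iff I₂ r.head t').mp this a t hF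
  · rintro ⟨h1, h2⟩
    constructor
    · intro r hrP t
      constructor
      · intro hb
        refine (sat_head_iff I₁ r.head t).mpr ?_
        intro a t' hF
        exact h1 t' (Or.inr ⟨r, hrP, t, ⟨hb, ⟨fun M hM => sat_mono hI M t (hb.1 M hM),
          fun M hM hs => hb.2 M hM (sat_mono hI M t hs)⟩⟩, hF⟩)
      · intro hb
        refine (sat_head_iff I₂ r.head t).mpr ?_
        intro a t' hF
        exact h2 t' (Or.inr ⟨r, hrP, t, Or.inr hb, hF⟩)
    · intro a δ hfact t ht
      exact h1 t (Or.inl ⟨δ, hfact, ht⟩)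
end

section
/- Let 𝓘, 𝓙 be three-valued interpretations with 𝓘 ≤p 𝓙, and let E be a ground expression (a ground metric atom, the negation not M of a ground metric atom, or a conjunction E₁∧…∧E_m of such). Then for all t ∈ 𝕋, ⟦E⟧_𝓘(t) ≤p ⟦E⟧_𝓙(t), where on truth values (identified with pairs) ≤p is the precision order undef ≤p false and undef ≤p true. -/
/-- If `𝓘 = (I₁,I₂)` and `𝓙 = (J₁,J₂)` are three-valued
interpretations with `𝓘 ≤p 𝓙`, then for every ground expression `E` (a ground
metric atom, a negated ground metric atom, or a conjunction of such, i.e. a body)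
and every `t ∈ 𝕋`, `⟦E⟧_𝓘(t) ≤p ⟦E⟧_𝓙(t)`. -/
theorem statement6 {T A : Type*} [AddCommGroup T] [LinearOrder T] [IsOrderedAddMonoid T]
    (I₁ I₂ J₁ J₂ : DatalogMTL.Interp T A) (hI : I₁ ≤ I₂) (hJ : J₁ ≤ J₂)
    (h₁ : I₁ ≤ J₁) (h₂ : J₂ ≤ I₂) :
    (∀ (M : DatalogMTL.MetricAtom T A) (t : T),
        DatalogMTL.precLE (DatalogMTL.tv3 I₁ I₂ M t) (DatalogMTL.tv3 J₁ J₂ M t)) ∧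
    (∀ (M : DatalogMTL.MetricAtom T A) (t : T),
        DatalogMTL.precLE (DatalogMTL.tv3Not I₁ I₂ M t) (DatalogMTL.tv3Not J₁ J₂ M t)) ∧
    (∀ (B : DatalogMTL.Body T A) (t : T),
        DatalogMTL.precLE (B.holds3 I₁ I₂ t) (B.holds3 J₁ J₂ t)) := by
  have mono : ∀ (I J : DatalogMTL.Interp T A), I ≤ J →
      ∀ (M : DatalogMTL.MetricAtom T A) (t : T),
        DatalogMTL.sat I M t → DatalogMTL.sat J M t := by
    intro I J hIJ M
    induction M with
    | top => intro t h; trivial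
    | bot => intro t h; exact h.elim
    | rel a => intro t h; exact hIJ t h
    | dMinus δ M ih =>
        rintro t ⟨t', ht', hs⟩; exact ⟨t', ht', ih t' hs⟩
    | dPlus δ M ih =>
        rintro t ⟨t', ht', hs⟩; exact ⟨t', ht', ih t' hs⟩
    | boxMinus δ M ih =>
        intro t h t' ht'; exact ih t' (h t' ht')
    | boxPlus δ M ih =>
        intro t h t' ht'; exact ih t' (h t' ht')
    | sSince δ M₁ M₂ ih₁ ih₂ =>
        rintro t ⟨t', ht', hs, hall⟩
        exact ⟨t', ht', ih₂ t' hs, fun t'' h1 h2 => ih₁ t'' (hall t'' h1 h2)⟩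
    | sUntil δ M₁ M₂ ih₁ ih₂ =>
        rintro t ⟨t', ht', hs, hall⟩
        exact ⟨t', ht', ih₂ t' hs, fun t'' h1 h2 => ih₁ t'' (hall t'' h1 h2)⟩
  refine ⟨fun M t => ⟨mono _ _ h₁ M t, mono _ _ h₂ M t⟩,
          fun M t => ⟨fun h hs => h (mono _ _ h₂ M t hs), fun h hs => h (mono _ _ h₁ M t hs)⟩,
          fun B t => ?_⟩
  constructor
  · rintro ⟨hp, hn⟩
    exact ⟨fun M hM => mono _ _ h₁ M t (hp M hM),
           fun M hM h => hn M hM (mono _ _ h₂ M t h)⟩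
  · rintro ⟨hp, hn⟩
    exact ⟨fun M hM => mono _ _ h₂ M t (hp M hM),
           fun M hM h => hn M hM (mono _ _ h₁ M t h)⟩
end

section
/- Let 𝒟 be a dataset, Π a program, and I, J two-valued interpretations with I ⊆ J. If (I,J) is an HT-model of 𝒟 and Π, then I is a pre-fixpoint of the operator X ↦ A¹_{𝒟,Π}(X,J), i.e. A¹_{𝒟,Π}(I,J) ⊆ I. -/
theorem aux14 {T A : Type*} [AddCommGroup T] [LinearOrder T] [IsOrderedAddMonoid T] {I : DatalogMTL.Interp T A}
    (M : DatalogMTL.HeadAtom T A) (t' : T) (hsat : DatalogMTL.sat I M.toMetric t')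
    (t : T) (a : A) (hF : (DatalogMTL.HeadAtom.rel a, t) ∈ DatalogMTL.F M t') :
    a ∈ I t := by
  induction M generalizing t t' with
  | top => simp [DatalogMTL.F] at hF
  | rel b =>
      simp [DatalogMTL.F] at hF
      rcases hF with ⟨hb, ht⟩
      subst hb; subst ht
      exact hsat
  | boxMinus δ M ih =>
      simp only [DatalogMTL.F, Set.mem_iUnion] at hF
      rcases hF with ⟨t'', ht'', hmem⟩
      exact ih t'' (hsat t'' ht'') t hmem
  | boxPlus δ M ih =>
      simp only [DatalogMTL.F, Set.mem_iUnion] at hF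
      rcases hF with ⟨t'', ht'', hmem⟩
      exact ih t'' (hsat t'' ht'') t hmem

/-- If `(I, J)` is an HT-model of `D` and `Π` (with `I ⊆ J`), then
`I` is a pre-fixpoint of `X ↦ A¹_{𝒟,Π}(X, J)`, i.e. `A¹_{𝒟,Π}(I, J) ⊆ I`. -/
theorem statement14 {T A : Type*} [AddCommGroup T] [LinearOrder T] [IsOrderedAddMonoid T]
    (D : DatalogMTL.Dataset T A) (P : DatalogMTL.Program T A)
    (I J : DatalogMTL.Interp T A) (hIJ : I ≤ J)
    (h : DatalogMTL.IsHTModel D P I J) :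
    DatalogMTL.A1 D P I J ≤ I := by
  intro t a ha
  rcases ha with ⟨δ, hδ, ht⟩ | ⟨r, hr, t', hb, hF⟩
  · exact h.1 a δ hδ t ht
  · have hsat : DatalogMTL.sat I r.head.toMetric t' := by
      rcases hb with ⟨⟨h1p, h1n⟩, _⟩
      exact ((h.2 r hr t').1) ⟨h1p, h1n⟩
    clear hb
    exact aux14 r.head t' hsat t a hF
end
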